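/- For every d ≥ 1 and every positive integer n, the number of subgroups of ℤ^d of index n equals the sum, over all tuples (a₁, …, a_d) of positive integers with a₁·a₂⋯a_d = n, of the product a₁⁰ · a₂¹ ⋯ a_d^{d-1}. Equivalently, this counting function is the d-fold Dirichlet convolution Id⁰ * Id¹ * ⋯ * Id^{d-1} of the power functions n ↦ n^k for k = 0, …, d−1. -/

import Mathlib

open ArithmeticFunction Finset AddSubgroup

/-! ### Arithmetic function lemmas -/

private lemma auxQ (d : ℕ) : ∀ m : ℕ, (∏ k ∈ range d, ArithmeticFunction.pow (k+1)) m
    = m * (∏ k ∈ range d, ArithmeticFunction.pow k) m := by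
  induction d with
  | zero => intro m; simp only [range_zero, prod_empty, one_apply]
            split_ifs with h <;> simp [h]
  | succ d ih =>
    intro m
    rw [prod_range_succ, prod_range_succ, mul_apply, mul_apply, Finset.mul_sum]
    refine Finset.sum_congr rfl ?_
    rintro ⟨x, y⟩ hxy
    rw [Nat.mem_divisorsAntidiagonal] at hxy
    obtain ⟨hprod, hne⟩ := hxy
    have hy : y ≠ 0 := by rintro rfl; simp at hprod; omega
    rw [ih x, pow_apply, pow_apply, if_neg (by simp), if_neg (by simp [hy])]
    rw [← hprod]; ring

private lemma auxPeval (d : ℕ) : ∀ n : ℕ, n ≠ 0 →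
    (∏ k ∈ range d, ArithmeticFunction.pow k) n
      = ∑ a ∈ Nat.finMulAntidiag d n, ∏ i : Fin d, (a i) ^ (i : ℕ) := by
  induction d with
  | zero =>
    intro n hn
    rcases eq_or_ne n 1 with rfl | h1
    · simp [Nat.finMulAntidiag_one]
    · rw [Nat.finMulAntidiag_zero_left h1]
      simp [one_apply, h1]
  | succ d ih =>
    intro n hn
    rw [prod_range_succ, mul_apply]
    have step1 : ∑ p ∈ n.divisorsAntidiagonal,
        (∏ k ∈ range d, ArithmeticFunction.pow k) p.1 * (ArithmeticFunction.pow d) p.2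
        = ∑ p ∈ n.divisorsAntidiagonal, ∑ a ∈ Nat.finMulAntidiag d p.1,
            (∏ i : Fin d, (a i) ^ (i:ℕ)) * p.2 ^ d := by
      refine Finset.sum_congr rfl ?_
      rintro ⟨x, y⟩ hxy
      rw [Nat.mem_divisorsAntidiagonal] at hxy
      have hx : x ≠ 0 := by rintro rfl; simp at hxy; omega
      have hy : y ≠ 0 := by rintro rfl; rw [mul_zero] at hxy; omega
      rw [ih x hx, pow_apply, if_neg (by simp [hy]), Finset.sum_mul]
    rw [step1, Finset.sum_sigma']
    refine Finset.sum_nbij' (fun q => Fin.snoc q.2 q.1.2)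
      (fun b => ⟨(∏ i : Fin d, b i.castSucc, b (Fin.last d)), Fin.init b⟩) ?_ ?_ ?_ ?_ ?_
    · rintro ⟨⟨x, y⟩, a⟩ hq
      simp only [Finset.mem_sigma, Nat.mem_divisorsAntidiagonal, Nat.mem_finMulAntidiag] at hq ⊢
      obtain ⟨⟨hxy, hne⟩, hax, hx0⟩ := hq
      constructor
      · rw [Fin.prod_snoc, hax, hxy]
      · exact hne
    · rintro b hb
      simp only [Nat.mem_finMulAntidiag] at hb
      simp only [Finset.mem_sigma, Nat.mem_divisorsAntidiagonal, Nat.mem_finMulAntidiag]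
      have hbi : ∀ i, b i ≠ 0 := by
        intro i hi
        apply hb.2
        rw [← hb.1]
        exact Finset.prod_eq_zero (Finset.mem_univ i) hi
      refine ⟨⟨?_, hb.2⟩, rfl, ?_⟩
      · rw [← hb.1, Fin.prod_univ_castSucc]
      · exact Finset.prod_ne_zero_iff.mpr fun i _ => hbi _
    · rintro ⟨⟨x, y⟩, a⟩ hq
      simp only [Finset.mem_sigma, Nat.mem_divisorsAntidiagonal, Nat.mem_finMulAntidiag] at hq
      obtain ⟨⟨hxy, hne⟩, hax, hx0⟩ := hq
      have h1 : ∀ i : Fin d, (Fin.snoc a y : Fin (d+1) → ℕ) i.castSucc = a i :=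
        fun i => Fin.snoc_castSucc ..
      have h2 : (Fin.snoc a y : Fin (d+1) → ℕ) (Fin.last d) = y := Fin.snoc_last ..
      simp only [h1, h2, hax, Fin.init_snoc]
    · intro b hb
      simp only [Fin.snoc_init_self]
    · rintro ⟨⟨x, y⟩, a⟩ hq
      simp only
      rw [Fin.prod_univ_castSucc]
      congr 1
      · refine Finset.prod_congr rfl fun i _ => ?_
        rw [Fin.snoc_castSucc, Fin.coe_castSucc]
      · rw [Fin.snoc_last, Fin.val_last]

private lemma auxPrec (d n : ℕ) : (∏ k ∈ range (d+1), ArithmeticFunction.pow k) n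
    = ∑ p ∈ n.divisorsAntidiagonal,
        p.1 * (∏ k ∈ range d, ArithmeticFunction.pow k) p.1 := by
  rw [prod_range_succ', mul_apply]
  refine Finset.sum_congr rfl ?_
  rintro ⟨x, y⟩ hxy
  rw [Nat.mem_divisorsAntidiagonal] at hxy
  have hy : y ≠ 0 := by rintro rfl; rw [mul_zero] at hxy; exact hxy.2 hxy.1.symm
  rw [auxQ, pow_apply, if_neg (by simp [hy]), pow_zero, mul_one]

/-! ### Group-theoretic infrastructure -/

/-- Projection onto coordinate 0. -/
private def prj (e : ℕ) : (Fin (e+1) → ℤ) →+ ℤ := Pi.evalAddMonoidHom (fun _ => ℤ) 0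

/-- Inclusion as coordinates 1..e. -/
private def inc (e : ℕ) : (Fin e → ℤ) →+ (Fin (e+1) → ℤ) where
  toFun x := Fin.cons 0 x
  map_zero' := by ext i; refine Fin.cases ?_ ?_ i <;> simp
  map_add' x y := by ext i; refine Fin.cases ?_ ?_ i <;> simp

private lemma pr_inc {e : ℕ} (x : Fin e → ℤ) : prj e (inc e x) = 0 := rfl

private lemma pr_single {e : ℕ} (t : ℤ) : prj e (Pi.single 0 t) = t := by simp [prj]

private lemma inc_inj {e : ℕ} : Function.Injective (inc e) := by
  intro x y h
  funext i
  have := congrFun h i.succ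
  simpa [inc] using this

private lemma pr_surj {e : ℕ} : Function.Surjective (prj e) := fun t => ⟨Fin.cons t 0, rfl⟩

private lemma decomp {e : ℕ} (x : Fin (e+1) → ℤ) :
    x = Pi.single 0 (x 0) + inc e (Fin.tail x) := by
  funext i
  refine Fin.cases ?_ ?_ i
  · simp [inc, Fin.tail]
  · intro j
    simp only [Pi.add_apply, Pi.single_apply, inc, AddMonoidHom.coe_mk, ZeroHom.coe_mk,
      Fin.cons_succ, Fin.tail]
    rw [if_neg (Fin.succ_ne_zero j), zero_add]

private lemma ker_pr {e : ℕ} : (prj e).ker = (inc e).range := by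
  ext x
  simp only [AddMonoidHom.mem_ker, AddMonoidHom.mem_range]
  constructor
  · intro h
    refine ⟨Fin.tail x, ?_⟩
    conv_rhs => rw [decomp x]
    simp only [prj, Pi.evalAddMonoidHom_apply] at h
    rw [h, Pi.single_zero, zero_add]
  · rintro ⟨y, rfl⟩; exact pr_inc y

private lemma index_eq {e : ℕ} (H : AddSubgroup (Fin (e+1) → ℤ)) :
    H.index = (H.comap (inc e)).index * (H.map (prj e)).index := by
  rw [AddSubgroup.index_comap, ← ker_pr, AddSubgroup.index_map,
    AddMonoidHom.range_eq_top_of_surjective _ pr_surj, AddSubgroup.index_top, mul_one,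
    ← AddSubgroup.relIndex_sup_right, sup_comm,
    AddSubgroup.relIndex_mul_index (le_sup_left : H ≤ H ⊔ (prj e).ker)]

/-- The cast map to `ZMod n`, componentwise. -/
private def qmap (d n : ℕ) : (Fin d → ℤ) →+ (Fin d → ZMod n) where
  toFun x i := (x i : ZMod n)
  map_zero' := by funext i; simp
  map_add' x y := by funext i; push_cast; simp

private lemma finite_subgroups (d n : ℕ) (hn : n ≠ 0) :
    Finite {H : AddSubgroup (Fin d → ℤ) // H.index = n} := by
  have key : ∀ H : {H : AddSubgroup (Fin d → ℤ) // H.index = n},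
      ((H : AddSubgroup (Fin d → ℤ)).map (qmap d n)).comap (qmap d n) = H := by
    rintro ⟨H, hH⟩
    show (H.map (qmap d n)).comap (qmap d n) = H
    rw [AddSubgroup.comap_map_eq]
    refine sup_eq_left.mpr ?_
    intro x hx
    simp only [AddMonoidHom.mem_ker, qmap, AddMonoidHom.coe_mk, ZeroHom.coe_mk] at hx
    have hdvd : ∀ i, (n : ℤ) ∣ x i := by
      intro i
      have := congrFun hx i
      rwa [Pi.zero_apply, ZMod.intCast_zmod_eq_zero_iff_dvd] at this
    have : x = n • fun i => x i / n := by
      funext i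
      simp only [Pi.smul_apply, nsmul_eq_mul]
      exact (Int.mul_ediv_cancel' (hdvd i)).symm
    rw [this, ← hH]
    exact H.nsmul_index_mem _
  have : NeZero n := ⟨hn⟩
  have : Finite (AddSubgroup (Fin d → ZMod n)) :=
    Finite.of_injective _ (SetLike.coe_injective (A := AddSubgroup (Fin d → ZMod n)))
  refine Finite.of_injective (fun H => (H : AddSubgroup (Fin d → ℤ)).map (qmap d n)) ?_
  intro H1 H2 h
  have := congrArg (AddSubgroup.comap (qmap d n)) h
  rw [key H1, key H2] at this
  exact Subtype.ext (by exact_mod_cast this)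

/-! ### The subgroup `Φ a K v` -/

private def Phi (e a : ℕ) (K : AddSubgroup (Fin e → ℤ)) (v : Fin e → ℤ) :
    AddSubgroup (Fin (e+1) → ℤ) :=
  (K.map (inc e)) ⊔ AddSubgroup.zmultiples (inc e v + Pi.single 0 (a:ℤ))

private lemma mem_Phi {e : ℕ} {a : ℕ} {K : AddSubgroup (Fin e → ℤ)} {v : Fin e → ℤ}
    {x : Fin (e+1) → ℤ} :
    x ∈ Phi e a K v ↔ ∃ k ∈ K, ∃ t : ℤ, x = inc e k + t • (inc e v + Pi.single 0 (a:ℤ)) := by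
  rw [Phi, AddSubgroup.mem_sup]
  constructor
  · rintro ⟨y, hy, z, hz, rfl⟩
    obtain ⟨k, hk, rfl⟩ := hy
    obtain ⟨t, rfl⟩ := AddSubgroup.mem_zmultiples_iff.mp hz
    exact ⟨k, hk, t, rfl⟩
  · rintro ⟨k, hk, t, rfl⟩
    exact ⟨inc e k, ⟨k, hk, rfl⟩, _, AddSubgroup.mem_zmultiples_iff.mpr ⟨t, rfl⟩, rfl⟩

private lemma pr_Phi_elt {e : ℕ} {a : ℕ} (k v : Fin e → ℤ) (t : ℤ) :
    prj e (inc e k + t • (inc e v + Pi.single 0 (a:ℤ))) = t * a := by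
  rw [map_add, map_zsmul, map_add, pr_inc, pr_inc, pr_single, zero_add, zero_add, smul_eq_mul]

private lemma Phi_map_pr {e : ℕ} (a : ℕ) (K : AddSubgroup (Fin e → ℤ)) (v : Fin e → ℤ) :
    (Phi e a K v).map (prj e) = AddSubgroup.zmultiples (a : ℤ) := by
  rw [Phi, AddSubgroup.map_sup, AddMonoidHom.map_zmultiples]
  have h1 : (K.map (inc e)).map (prj e) = ⊥ := by
    rw [eq_bot_iff]
    rintro x ⟨y, ⟨k, hk, rfl⟩, rfl⟩
    simp [pr_inc]
  have h2 : prj e (inc e v + Pi.single 0 (a:ℤ)) = a := by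
    rw [map_add, pr_inc, pr_single, zero_add]
  rw [h1, h2, bot_sup_eq]

private lemma Phi_comap_inc {e : ℕ} {a : ℕ} (ha : a ≠ 0) (K : AddSubgroup (Fin e → ℤ))
    (v : Fin e → ℤ) : (Phi e a K v).comap (inc e) = K := by
  ext x
  simp only [AddSubgroup.mem_comap, mem_Phi]
  constructor
  · rintro ⟨k, hk, t, hx⟩
    have hpr := congrArg (prj e) hx
    rw [pr_inc, pr_Phi_elt] at hpr
    have ht : t = 0 := by
      rcases mul_eq_zero.mp hpr.symm with h | h
      · exact h
      · exact absurd (by exact_mod_cast h) ha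
    rw [ht, zero_smul, add_zero] at hx
    rwa [inc_inj hx]
  · intro hx
    exact ⟨x, hx, 0, by rw [zero_smul, add_zero]⟩

private lemma Phi_index {e : ℕ} {a : ℕ} (ha : a ≠ 0) (K : AddSubgroup (Fin e → ℤ))
    (v : Fin e → ℤ) : (Phi e a K v).index = K.index * a := by
  rw [index_eq, Phi_comap_inc ha, Phi_map_pr, Int.index_zmultiples, Int.natAbs_natCast]

/-! ### Base case -/

private lemma base_case (n : ℕ) :
    Nat.card {H : AddSubgroup (Fin 0 → ℤ) // H.index = n} = if n = 1 then 1 else 0 := by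
  have hidx : ∀ H : AddSubgroup (Fin 0 → ℤ), H.index = 1 := by
    intro H
    have : H = ⊤ := Subsingleton.elim _ _
    rw [this, AddSubgroup.index_top]
  split_ifs with h
  · subst h
    rw [Nat.card_eq_one_iff_unique]
    exact ⟨⟨fun a b => Subtype.ext (Subsingleton.elim _ _)⟩, ⟨⊤, AddSubgroup.index_top⟩⟩
  · rw [Nat.card_eq_zero]
    left
    exact ⟨fun ⟨H, hH⟩ => h (hH ▸ (hidx H).symm ▸ (hidx H))⟩

private lemma nat_card_sigma {ι : Type*} [Fintype ι] (f : ι → Type*) [∀ i, Finite (f i)] :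
    Nat.card (Σ i, f i) = ∑ i, Nat.card (f i) := by
  letI := fun i => Fintype.ofFinite (f i)
  rw [Nat.card_eq_fintype_card, Fintype.card_sigma]
  exact Finset.sum_congr rfl fun i _ => (Nat.card_eq_fintype_card).symm

/-! ### Recursion -/

private lemma rec_card (e n : ℕ) (hn : n ≠ 0) :
    Nat.card {H : AddSubgroup (Fin (e+1) → ℤ) // H.index = n}
      = ∑ p ∈ n.divisorsAntidiagonal,
          p.1 * Nat.card {K : AddSubgroup (Fin e → ℤ) // K.index = p.1} := by
  classical
  set T := Σ p : {p : ℕ × ℕ // p ∈ n.divisorsAntidiagonal},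
    Σ K : {K : AddSubgroup (Fin e → ℤ) // K.index = p.1.1},
      (Fin e → ℤ) ⧸ (K : AddSubgroup (Fin e → ℤ)) with hT
  have hp_ne : ∀ p : ℕ × ℕ, p ∈ n.divisorsAntidiagonal → p.1 ≠ 0 ∧ p.2 ≠ 0 := by
    intro p hp
    rw [Nat.mem_divisorsAntidiagonal] at hp
    constructor
    · rintro h0; rw [h0, zero_mul] at hp; exact hp.2 hp.1.symm
    · rintro h0; rw [h0, mul_zero] at hp; exact hp.2 hp.1.symm
  -- the map
  let F : T → {H : AddSubgroup (Fin (e+1) → ℤ) // H.index = n} := fun q =>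
    ⟨Phi e q.1.1.2 q.2.1.1 (Quotient.out q.2.2), by
      rw [Phi_index (hp_ne _ q.1.2).2, q.2.1.2,
        (Nat.mem_divisorsAntidiagonal.mp q.1.2).1]⟩
  have hFbij : Function.Bijective F := by
    constructor
    · rintro ⟨⟨⟨m, a⟩, hp⟩, ⟨K, hK⟩, w⟩ ⟨⟨⟨m', a'⟩, hp'⟩, ⟨K', hK'⟩, w'⟩ hFq
      have hgrp : Phi e a K (Quotient.out w) = Phi e a' K' (Quotient.out w') :=
        congrArg Subtype.val hFq
      have ha : a ≠ 0 := (hp_ne _ hp).2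
      have ha' : a' ≠ 0 := (hp_ne _ hp').2
      -- a = a'
      have haa : a = a' := by
        have := congrArg (fun H => (AddSubgroup.map (prj e) H).index) hgrp
        simpa only [Phi_map_pr, Int.index_zmultiples, Int.natAbs_natCast] using this
      subst haa
      -- K = K'
      have hKK : K = K' := by
        have := congrArg (fun H => AddSubgroup.comap (inc e) H) hgrp
        simpa only [Phi_comap_inc ha] using this
      subst hKK
      have hmm : m = m' := hK.symm.trans hK'
      subst hmm
      -- w = w'
      have hww : w = w' := by
        have hmem : inc e (Quotient.out w) + Pi.single 0 (a:ℤ) ∈ Phi e a K (Quotient.out w') := by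
          rw [← hgrp]
          exact mem_Phi.mpr ⟨0, K.zero_mem, 1, by rw [_root_.map_zero, zero_add, one_smul]⟩
        obtain ⟨k, hk, t, hx⟩ := mem_Phi.mp hmem
        have hpr := congrArg (prj e) hx
        rw [map_add, pr_inc, pr_single, zero_add, pr_Phi_elt] at hpr
        have ht : t = 1 := by
          have : (a:ℤ) ≠ 0 := by exact_mod_cast ha
          exact mul_right_cancel₀ this (by rw [one_mul]; exact hpr.symm)
        rw [ht, one_smul] at hx
        have : inc e (Quotient.out w) = inc e (k + Quotient.out w') := by
          rw [map_add]
          apply add_right_cancel (b := Pi.single 0 (a:ℤ))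
          rw [hx]; abel
        have hout : Quotient.out w = k + Quotient.out w' := inc_inj this
        have h1 : (QuotientAddGroup.mk (Quotient.out w) : (Fin e → ℤ) ⧸ K)
            = QuotientAddGroup.mk (Quotient.out w') := by
          refine (QuotientAddGroup.eq).mpr ?_
          rw [hout]
          simpa using K.neg_mem hk
        rwa [QuotientAddGroup.out_eq', QuotientAddGroup.out_eq'] at h1
      subst hww
      rfl
    · rintro ⟨H, hH⟩
      obtain ⟨g, hg⟩ := Int.subgroup_cyclic (H.map (prj e))
      rw [← AddSubgroup.zmultiples_eq_closure] at hg
      set a : ℕ := g.natAbs with hag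
      have hmap : H.map (prj e) = AddSubgroup.zmultiples (a : ℤ) := by
        rw [hg, Int.zmultiples_natAbs]
      set K : AddSubgroup (Fin e → ℤ) := H.comap (inc e) with hKdef
      set m : ℕ := K.index with hmdef
      have hidx : m * a = n := by
        rw [← hH, index_eq H, hmap, Int.index_zmultiples, Int.natAbs_natCast]
      have hpmem : (m, a) ∈ n.divisorsAntidiagonal :=
        Nat.mem_divisorsAntidiagonal.mpr ⟨hidx, hn⟩
      have ha : a ≠ 0 := (hp_ne _ hpmem).2
      -- find h ∈ H with prj h = a
      have : (a : ℤ) ∈ H.map (prj e) := by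
        rw [hmap]; exact AddSubgroup.mem_zmultiples _
      obtain ⟨h, hhH, hpr⟩ := this
      set v₀ : Fin e → ℤ := Fin.tail h with hv₀
      have hdec : h = Pi.single 0 (a:ℤ) + inc e v₀ := by
        conv_lhs => rw [decomp h]
        rw [show h 0 = (a:ℤ) from hpr]
      set w : (Fin e → ℤ) ⧸ (K : AddSubgroup (Fin e → ℤ)) := QuotientAddGroup.mk v₀ with hw
      refine ⟨⟨⟨(m, a), hpmem⟩, ⟨K, rfl⟩, w⟩, ?_⟩
      apply Subtype.ext
      show Phi e a K (Quotient.out w) = H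
      -- the generator is in H
      have hk₀ : Quotient.out w - v₀ ∈ K := by
        have h1 : (QuotientAddGroup.mk v₀ : (Fin e → ℤ) ⧸ K)
            = QuotientAddGroup.mk (Quotient.out w) := by
          rw [QuotientAddGroup.out_eq', hw]
        have := (QuotientAddGroup.eq).mp h1
        simpa [neg_add_eq_sub] using this
      have hgen : inc e (Quotient.out w) + Pi.single 0 (a:ℤ) ∈ H := by
        have : inc e (Quotient.out w) + Pi.single 0 (a:ℤ)
            = h + inc e (Quotient.out w - v₀) := by
          rw [hdec, map_sub]; abel
        rw [this]
        exact H.add_mem hhH hk₀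
      apply le_antisymm
      · -- Phi ≤ H
        rw [Phi]
        refine sup_le ?_ ?_
        · rintro x ⟨k, hk, rfl⟩
          exact hk
        · rintro x hx
          obtain ⟨t, rfl⟩ := AddSubgroup.mem_zmultiples_iff.mp hx
          exact H.zsmul_mem hgen t
      · -- H ≤ Phi
        intro x hx
        have : prj e x ∈ H.map (prj e) := ⟨x, hx, rfl⟩
        rw [hmap] at this
        obtain ⟨t, ht⟩ := AddSubgroup.mem_zmultiples_iff.mp this
        set y : Fin (e+1) → ℤ := x - t • (inc e (Quotient.out w) + Pi.single 0 (a:ℤ))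
          with hy
        have hyH : y ∈ H := H.sub_mem hx (H.zsmul_mem hgen t)
        have hy0 : y 0 = 0 := by
          have : prj e y = 0 := by
            rw [hy, map_sub, map_zsmul, map_add, pr_inc, pr_single, zero_add, ← ht]
            simp
          simpa [prj] using this
        have hyinc : y = inc e (Fin.tail y) := by
          conv_lhs => rw [decomp y]
          rw [hy0, Pi.single_zero, zero_add]
        have htail : Fin.tail y ∈ K := by
          rw [hKdef]
          show inc e (Fin.tail y) ∈ H
          rw [← hyinc]; exact hyH
        refine mem_Phi.mpr ⟨Fin.tail y, htail, t, ?_⟩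
        rw [← hyinc, hy]; abel
  -- now count
  have hfin : ∀ p : {p : ℕ × ℕ // p ∈ n.divisorsAntidiagonal},
      Finite (Σ K : {K : AddSubgroup (Fin e → ℤ) // K.index = p.1.1},
        (Fin e → ℤ) ⧸ (K : AddSubgroup (Fin e → ℤ))) := by
    rintro ⟨⟨m, a⟩, hp⟩
    have hm : m ≠ 0 := (hp_ne _ hp).1
    have h1 : Finite {K : AddSubgroup (Fin e → ℤ) // K.index = m} := finite_subgroups e m hm
    have h2 : ∀ K : {K : AddSubgroup (Fin e → ℤ) // K.index = m},
        Finite ((Fin e → ℤ) ⧸ (K : AddSubgroup (Fin e → ℤ))) := by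
      rintro ⟨K, hK⟩
      have hfi : K.FiniteIndex := ⟨by rw [hK]; exact hm⟩
      exact K.finite_quotient_of_finiteIndex
    exact Finite.instSigma
  have hcard : Nat.card {H : AddSubgroup (Fin (e+1) → ℤ) // H.index = n} = Nat.card T :=
    (Nat.card_eq_of_bijective F hFbij).symm
  have hterm : ∀ p : {p : ℕ × ℕ // p ∈ n.divisorsAntidiagonal},
      Nat.card (Σ K : {K : AddSubgroup (Fin e → ℤ) // K.index = p.1.1},
        (Fin e → ℤ) ⧸ (K : AddSubgroup (Fin e → ℤ)))
      = (p : ℕ × ℕ).1 * Nat.card {K : AddSubgroup (Fin e → ℤ) // K.index = (p : ℕ × ℕ).1} := by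
    rintro ⟨⟨m, a⟩, hp⟩
    have hm : m ≠ 0 := (hp_ne _ hp).1
    haveI h1 : Finite {K : AddSubgroup (Fin e → ℤ) // K.index = m} := finite_subgroups e m hm
    haveI := Fintype.ofFinite {K : AddSubgroup (Fin e → ℤ) // K.index = m}
    haveI h2 : ∀ K : {K : AddSubgroup (Fin e → ℤ) // K.index = m},
        Finite ((Fin e → ℤ) ⧸ (K : AddSubgroup (Fin e → ℤ))) := by
      rintro ⟨K, hK⟩
      haveI hfi : K.FiniteIndex := ⟨by rw [hK]; exact hm⟩
      exact K.finite_quotient_of_finiteIndex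
    rw [nat_card_sigma]
    have hq : ∀ K : {K : AddSubgroup (Fin e → ℤ) // K.index = m},
        Nat.card ((Fin e → ℤ) ⧸ (K : AddSubgroup (Fin e → ℤ))) = m := fun K => K.2
    rw [Finset.sum_congr rfl (fun K _ => hq K), Finset.sum_const, Finset.card_univ,
      ← Nat.card_eq_fintype_card, smul_eq_mul, mul_comm]
  haveI : ∀ p : {p : ℕ × ℕ // p ∈ n.divisorsAntidiagonal},
      Finite (Σ K : {K : AddSubgroup (Fin e → ℤ) // K.index = p.1.1},
        (Fin e → ℤ) ⧸ (K : AddSubgroup (Fin e → ℤ))) := hfin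
  rw [hcard, hT, nat_card_sigma]
  rw [Finset.sum_congr rfl (fun p (_ : p ∈ Finset.univ) => hterm p)]
  exact Finset.sum_coe_sort n.divisorsAntidiagonal
    (fun q => q.1 * Nat.card {K : AddSubgroup (Fin e → ℤ) // K.index = q.1})

private lemma count_eq (d : ℕ) : ∀ n : ℕ, n ≠ 0 →
    Nat.card {H : AddSubgroup (Fin d → ℤ) // H.index = n}
      = (∏ k ∈ range d, ArithmeticFunction.pow k) n := by
  induction d with
  | zero =>
    intro n hn
    rw [base_case]
    simp only [range_zero, prod_empty, one_apply]
  | succ d ih =>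
    intro n hn
    rw [rec_card d n hn, auxPrec]
    refine Finset.sum_congr rfl ?_
    rintro ⟨m, a⟩ hp
    rw [Nat.mem_divisorsAntidiagonal] at hp
    have hm : m ≠ 0 := by rintro rfl; rw [zero_mul] at hp; exact hp.2 hp.1.symm
    rw [ih m hm]

open ArithmeticFunction in
/-- The number of index-`n` subgroups of `ℤ^d` equals the sum over factorizations
`a₁ ⋯ a_d = n` of `∏ aᵢ^(i-1)`; equivalently it is the `d`-fold Dirichlet
convolution of the power functions `Id⁰ * Id¹ * ⋯ * Id^(d-1)`. -/
theorem stmt1 (d : ℕ) (hd : 1 ≤ d) (n : ℕ) (hn : 0 < n) :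
    (Nat.card {H : AddSubgroup (Fin d → ℤ) // H.index = n} =
      ∑ a ∈ Finset.filter (fun a : Fin d → ℕ => ∏ i, a i = n)
          (Fintype.piFinset fun _ : Fin d => Finset.Icc 1 n),
        ∏ i : Fin d, (a i) ^ (i : ℕ)) ∧
    Nat.card {H : AddSubgroup (Fin d → ℤ) // H.index = n} =
      (∏ k ∈ Finset.range d, ArithmeticFunction.pow k) n := by
  have hn0 : n ≠ 0 := hn.ne'
  have hset : Nat.finMulAntidiag d n = Finset.filter (fun a : Fin d → ℕ => ∏ i, a i = n)
      (Fintype.piFinset fun _ : Fin d => Finset.Icc 1 n) := by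
    ext f
    simp only [Nat.mem_finMulAntidiag, Finset.mem_filter, Fintype.mem_piFinset, Finset.mem_Icc]
    constructor
    · rintro ⟨hf, hne⟩
      refine ⟨fun i => ⟨?_, ?_⟩, hf⟩
      · refine Nat.one_le_iff_ne_zero.mpr fun h => hne ?_
        rw [← hf]
        exact Finset.prod_eq_zero (Finset.mem_univ i) h
      · refine Nat.le_of_dvd hn ?_
        rw [← hf]
        exact Finset.dvd_prod_of_mem f (Finset.mem_univ i)
    · rintro ⟨-, hf⟩
      exact ⟨hf, hn0⟩
  refine ⟨?_, count_eq d n hn0⟩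
  rw [count_eq d n hn0, auxPeval d n hn0, hset]
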